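/- arXiv:2111.10853 — 4 statements merged into one kernel-verified Lean document; each statement's English description precedes it below -/
import Mathlib

section
/- Consider the linear model Y = βX + θZ + ε where X, Z, ε are square-integrable real random variables, β, θ ∈ ℝ, E[ε | X, Z] = 0, and let σ² = E[ε²], ν(Z) = E[X | Z], γ² = E[(X − ν(Z))²] with γ², σ² > 0. Then the nonparametric partial correlation ρ = E[(Y − μ(Z))(X − ν(Z))] / √(E[(Y − μ(Z))²]·E[(X − ν(Z))²]) equals β γ / √(β²γ² + σ²), where γ = √(γ²) and μ(Z) = E[Y | Z]. In particular ρ → 0 as γ → 0. -/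
open MeasureTheory

private lemma memLp_two_condexp {Ω : Type*} {m m0 : MeasurableSpace Ω} (P : Measure Ω)
    [IsFiniteMeasure P] (hm : m ≤ m0) {f : Ω → ℝ} (hf : MemLp f 2 P) :
    MemLp (P[f|m]) 2 P := by
  have hfint : Integrable f P := hf.integrable one_le_two
  set fL : Lp ℝ 2 P := hf.toLp f with hfL
  have hcoe : (fL : Ω → ℝ) =ᵐ[P] f := hf.coeFn_toLp
  have hg : ((condExpL2 ℝ ℝ hm fL : Lp ℝ 2 P) : Ω → ℝ) =ᵐ[P] P[f|m] := by
    refine ae_eq_condExp_of_forall_setIntegral_eq hm hfint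
      (fun s _ hμs => integrableOn_condExpL2_of_measure_ne_top hm hμs.ne fL)
      (fun s hs hμs => ?_) (aestronglyMeasurable_condExpL2 hm fL)
    rw [integral_condExpL2_eq hm fL hs hμs.ne]
    exact setIntegral_congr_ae (hm s hs) (hcoe.mono fun x hx _ => hx)
  exact (Lp.memLp _).ae_eq hg

/-- In the linear model `Y = βX + θZ + ε` with `E[ε | X,Z] = 0`, `σ² = E[ε²]`,
`γ² = E[(X − ν(Z))²] > 0`, `σ² > 0`, the nonparametric partial correlation
`ρ = E[(Y − μ(Z))(X − ν(Z))] / √(E[(Y − μ(Z))²]·E[(X − ν(Z))²])` equals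
`βγ / √(β²γ² + σ²)` with `γ = √(γ²)`. -/
theorem stmt3
    {Ω : Type*} {m0 : MeasurableSpace Ω} (P : Measure Ω) [IsProbabilityMeasure P]
    (X Z ε Y : Ω → ℝ) (β θ : ℝ)
    (hXm : Measurable X) (hZm : Measurable Z)
    (hX2 : MemLp X 2 P) (hZ2 : MemLp Z 2 P) (hε2 : MemLp ε 2 P)
    (hmodel : ∀ ω, Y ω = β * X ω + θ * Z ω + ε ω)
    (hε : P[ε | MeasurableSpace.comap (fun ω => (X ω, Z ω)) inferInstance] =ᵐ[P] 0)
    (σsq γsq : ℝ)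
    (hσ : σsq = ∫ ω, (ε ω) ^ 2 ∂P)
    (hγ : γsq = ∫ ω, (X ω - (P[X | MeasurableSpace.comap Z inferInstance]) ω) ^ 2 ∂P)
    (hγpos : 0 < γsq) (hσpos : 0 < σsq) :
    (∫ ω, (Y ω - (P[Y | MeasurableSpace.comap Z inferInstance]) ω)
        * (X ω - (P[X | MeasurableSpace.comap Z inferInstance]) ω) ∂P)
      / Real.sqrt
          ((∫ ω, (Y ω - (P[Y | MeasurableSpace.comap Z inferInstance]) ω) ^ 2 ∂P)
            * ∫ ω, (X ω - (P[X | MeasurableSpace.comap Z inferInstance]) ω) ^ 2 ∂P)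
      = β * Real.sqrt γsq / Real.sqrt (β ^ 2 * γsq + σsq) := by
  set mZ : MeasurableSpace Ω := MeasurableSpace.comap Z inferInstance with hmZdef
  set mXZ : MeasurableSpace Ω :=
    MeasurableSpace.comap (fun ω => (X ω, Z ω)) inferInstance with hmXZdef
  have hmZ : mZ ≤ m0 := hZm.comap_le
  have hmXZ : mXZ ≤ m0 := (hXm.prodMk hZm).comap_le
  have hZle : mZ ≤ mXZ := by
    rw [hmZdef, hmXZdef]
    have h : Z = (fun p : ℝ × ℝ => p.2) ∘ (fun ω => (X ω, Z ω)) := rfl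
    rw [h, ← MeasurableSpace.comap_comp]
    exact MeasurableSpace.comap_mono measurable_snd.comap_le
  have hXle : MeasurableSpace.comap X inferInstance ≤ mXZ := by
    rw [hmXZdef]
    have h : X = (fun p : ℝ × ℝ => p.1) ∘ (fun ω => (X ω, Z ω)) := rfl
    rw [h, ← MeasurableSpace.comap_comp]
    exact MeasurableSpace.comap_mono measurable_fst.comap_le
  have hXint : Integrable X P := hX2.integrable one_le_two
  have hZint : Integrable Z P := hZ2.integrable one_le_two
  have hεint : Integrable ε P := hε2.integrable one_le_two
  -- E[ε | Z] = 0
  have hεZ : P[ε|mZ] =ᵐ[P] 0 := by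
    have h1 : P[P[ε|mXZ]|mZ] =ᵐ[P] P[ε|mZ] := condExp_condExp_of_le hZle hmXZ
    have h2 : P[P[ε|mXZ]|mZ] =ᵐ[P] P[(0 : Ω → ℝ)|mZ] := condExp_congr_ae hε
    rw [condExp_zero] at h2
    exact h1.symm.trans h2
  -- conditional expectation of Y given Z
  have hZsm : StronglyMeasurable[mZ] Z :=
    (Measurable.of_comap_le le_rfl).stronglyMeasurable
  have hcond : P[Y|mZ] =ᵐ[P] fun ω => β * (P[X|mZ]) ω + θ * Z ω := by
    have hYe : Y = (fun ω => β * X ω + θ * Z ω) + ε := by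
      funext ω; simp [hmodel ω]
    have hA : Integrable (fun ω => β * X ω + θ * Z ω) P :=
      (hXint.const_mul β).add (hZint.const_mul θ)
    have h1 : P[Y|mZ] =ᵐ[P] P[fun ω => β * X ω + θ * Z ω|mZ] + P[ε|mZ] := by
      rw [hYe]; exact condExp_add hA hεint mZ
    have h2 : P[fun ω => β * X ω + θ * Z ω|mZ]
        =ᵐ[P] P[fun ω => β * X ω|mZ] + P[fun ω => θ * Z ω|mZ] :=
      condExp_add (hXint.const_mul β) (hZint.const_mul θ) mZ
    have h3 : P[fun ω => β * X ω|mZ] =ᵐ[P] fun ω => β * (P[X|mZ]) ω := condExp_smul β X mZ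
    have h4 : P[fun ω => θ * Z ω|mZ] = fun ω => θ * Z ω := by
      have := condExp_of_stronglyMeasurable hmZ (hZsm.const_smul θ) (hZint.const_mul θ)
      exact this
    filter_upwards [h1, h2, h3, hεZ] with ω hω1 hω2 hω3 hω4
    simp only [Pi.add_apply, Pi.zero_apply] at *
    rw [hω1, hω2, hω3, h4, hω4]; ring
  -- key a.e. identity
  set ν : Ω → ℝ := P[X|mZ] with hνdef
  have hkey : (fun ω => Y ω - (P[Y|mZ]) ω)
      =ᵐ[P] fun ω => β * (X ω - ν ω) + ε ω := by
    filter_upwards [hcond] with ω hω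
    rw [hmodel ω, hω]; ring
  set g : Ω → ℝ := fun ω => X ω - ν ω with hgdef
  have hν2 : MemLp ν 2 P := memLp_two_condexp P hmZ hX2
  have hg2 : MemLp g 2 P := hX2.sub hν2
  have hgε_int : Integrable (fun ω => g ω * ε ω) P := by
    have h : MemLp (g • ε) 1 P := hε2.smul hg2
    exact memLp_one_iff_integrable.mp h
  have hgsm : StronglyMeasurable[mXZ] g := by
    have hXsm : StronglyMeasurable[mXZ] X :=
      (Measurable.of_comap_le hXle).stronglyMeasurable
    exact hXsm.sub (stronglyMeasurable_condExp.mono hZle)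
  -- orthogonality: ∫ g ε = 0
  have horth : ∫ ω, g ω * ε ω ∂P = 0 := by
    have h1 : P[g * ε|mXZ] =ᵐ[P] g * P[ε|mXZ] :=
      condExp_mul_of_stronglyMeasurable_left hgsm hgε_int hεint
    have h2 : P[g * ε|mXZ] =ᵐ[P] 0 := by
      filter_upwards [h1, hε] with ω hω1 hω2
      simp only [Pi.mul_apply, Pi.zero_apply] at *
      rw [hω1, hω2, mul_zero]
    calc ∫ ω, g ω * ε ω ∂P = ∫ ω, (P[g * ε|mXZ]) ω ∂P :=
          (integral_condExp hmXZ (f := g * ε)).symm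
      _ = ∫ ω, (0 : ℝ) ∂P := integral_congr_ae h2
      _ = 0 := integral_zero _ _
  have hgsq_int : Integrable (fun ω => g ω ^ 2) P := hg2.integrable_sq
  have hεsq_int : Integrable (fun ω => ε ω ^ 2) P := hε2.integrable_sq
  -- numerator
  have hnum : (∫ ω, (Y ω - (P[Y|mZ]) ω) * (X ω - ν ω) ∂P) = β * γsq := by
    have h1 : (fun ω => (Y ω - (P[Y|mZ]) ω) * (X ω - ν ω))
        =ᵐ[P] fun ω => β * g ω ^ 2 + g ω * ε ω := by
      filter_upwards [hkey] with ω hω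
      rw [hω]; simp only [hgdef]; ring
    rw [integral_congr_ae h1, integral_add (hgsq_int.const_mul β) hgε_int,
      integral_const_mul, horth, add_zero, hγ]
  -- variance of residual
  have hden1 : (∫ ω, (Y ω - (P[Y|mZ]) ω) ^ 2 ∂P) = β ^ 2 * γsq + σsq := by
    have h1 : (fun ω => (Y ω - (P[Y|mZ]) ω) ^ 2)
        =ᵐ[P] fun ω => β ^ 2 * g ω ^ 2 + (2 * β) * (g ω * ε ω) + ε ω ^ 2 := by
      filter_upwards [hkey] with ω hω
      rw [hω]; simp only [hgdef]; ring
    have hγg : γsq = ∫ ω, g ω ^ 2 ∂P := hγ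
    have i1 : Integrable (fun ω => β ^ 2 * g ω ^ 2 + 2 * β * (g ω * ε ω)) P := by
      exact (hgsq_int.const_mul _).add (hgε_int.const_mul _)
    rw [integral_congr_ae h1, integral_add i1 hεsq_int,
      integral_add (hgsq_int.const_mul _) (hgε_int.const_mul _),
      integral_const_mul, integral_const_mul, horth, ← hγg, ← hσ]
    ring
  rw [hnum, hden1, ← hγ]
  -- algebra
  have hApos : 0 < β ^ 2 * γsq + σsq := by positivity
  rw [Real.sqrt_mul hApos.le]
  have hγs : Real.sqrt γsq ≠ 0 := by positivity
  have hAs : Real.sqrt (β ^ 2 * γsq + σsq) ≠ 0 := by positivity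
  rw [div_eq_div_iff (by positivity) (by positivity)]
  have : γsq = Real.sqrt γsq * Real.sqrt γsq := (Real.mul_self_sqrt hγpos.le).symm
  calc β * γsq * Real.sqrt (β ^ 2 * γsq + σsq)
      = β * (Real.sqrt γsq * Real.sqrt γsq) * Real.sqrt (β ^ 2 * γsq + σsq) := by rw [← this]
    _ = β * Real.sqrt γsq * (Real.sqrt (β ^ 2 * γsq + σsq) * Real.sqrt γsq) := by ring
end

section
/- Let 𝒳, 𝒴, 𝒵 be finite nonempty sets and let p be a probability mass function on 𝒳 × 𝒴 × 𝒵 with p(x,y,z) > 0 for all (x,y,z). Define p₀(x,y,z) = p(y|x,z)·p_X(x)·p_Z(z), where p_X, p_Z are the marginals of p and p(y|x,z) = p(x,y,z)/p_{XZ}(x,z). Then p₀ is a probability mass function under which X and Z are independent, and for every probability mass function q on 𝒳 × 𝒴 × 𝒵 with q(x,y,z) > 0 everywhere under which X and Z are independent (i.e. q_{XZ}(x,z) = q_X(x)·q_Z(z) for all x,z), the Kullback–Leibler divergence satisfies KL(p ‖ p₀) ≤ KL(p ‖ q), where KL(p ‖ q) = Σ_{x,y,z} p(x,y,z) log(p(x,y,z)/q(x,y,z)).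 That is, p₀ is the distribution closest to p in Kullback–Leibler distance subject to making X and Z independent. -/
open Finset

lemma gibbs_aux {S : Type*} [Fintype S] (a b : S → ℝ)
    (ha : ∀ s, 0 < a s) (hb : ∀ s, 0 < b s)
    (hab : ∑ s, b s ≤ ∑ s, a s) :
    ∑ s, a s * Real.log (b s / a s) ≤ 0 := by
  have h : ∀ s, a s * Real.log (b s / a s) ≤ b s - a s := by
    intro s
    have h1 : Real.log (b s / a s) ≤ b s / a s - 1 :=
      Real.log_le_sub_one_of_pos (div_pos (hb s) (ha s))
    calc a s * Real.log (b s / a s) ≤ a s * (b s / a s - 1) :=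
          mul_le_mul_of_nonneg_left h1 (ha s).le
      _ = b s - a s := by
          rw [mul_sub, mul_one, mul_div_cancel₀ _ (ha s).ne']
  calc ∑ s, a s * Real.log (b s / a s) ≤ ∑ s, (b s - a s) :=
        Finset.sum_le_sum (fun s _ => h s)
    _ = ∑ s, b s - ∑ s, a s := Finset.sum_sub_distrib _ _
    _ ≤ 0 := by linarith

/-- `p₀(x,y,z) = p(y|x,z)·p_X(x)·p_Z(z)` is a pmf making `X` and `Z` independent,
and it is the KL-closest such distribution to `p`. -/
theorem stmt4
    {𝒳 𝒴 𝒵 : Type*} [Fintype 𝒳] [Fintype 𝒴] [Fintype 𝒵]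
    [Nonempty 𝒳] [Nonempty 𝒴] [Nonempty 𝒵]
    (p : 𝒳 × 𝒴 × 𝒵 → ℝ)
    (hpos : ∀ u, 0 < p u) (hsum : ∑ u, p u = 1)
    (pX : 𝒳 → ℝ) (hpX : ∀ x, pX x = ∑ y, ∑ z, p (x, y, z))
    (pZ : 𝒵 → ℝ) (hpZ : ∀ z, pZ z = ∑ x, ∑ y, p (x, y, z))
    (pXZ : 𝒳 → 𝒵 → ℝ) (hpXZ : ∀ x z, pXZ x z = ∑ y, p (x, y, z))
    (p0 : 𝒳 × 𝒴 × 𝒵 → ℝ)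
    (hp0 : ∀ x y z, p0 (x, y, z) = p (x, y, z) / pXZ x z * pX x * pZ z) :
    -- p₀ is a probability mass function
    ((∀ u, 0 < p0 u) ∧ ∑ u, p0 u = 1) ∧
    -- under p₀, X and Z are independent
    (∀ x z, (∑ y, p0 (x, y, z))
        = (∑ y, ∑ z', p0 (x, y, z')) * (∑ x', ∑ y, p0 (x', y, z))) ∧
    -- p₀ minimizes KL(p‖·) among positive pmfs q making X and Z independent
    (∀ q : 𝒳 × 𝒴 × 𝒵 → ℝ, (∀ u, 0 < q u) → (∑ u, q u = 1) →
      (∀ x z, (∑ y, q (x, y, z))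
          = (∑ y, ∑ z', q (x, y, z')) * (∑ x', ∑ y, q (x', y, z))) →
      (∑ u, p u * Real.log (p u / p0 u)) ≤ ∑ u, p u * Real.log (p u / q u)) := by
  -- positivity of marginals
  have hpXZpos : ∀ x z, 0 < pXZ x z := fun x z => by
    rw [hpXZ]; exact Finset.sum_pos (fun y _ => hpos _) univ_nonempty
  have hpXpos : ∀ x, 0 < pX x := fun x => by
    rw [hpX]
    exact Finset.sum_pos (fun y _ => Finset.sum_pos (fun z _ => hpos _) univ_nonempty)
      univ_nonempty
  have hpZpos : ∀ z, 0 < pZ z := fun z => by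
    rw [hpZ]
    exact Finset.sum_pos (fun x _ => Finset.sum_pos (fun y _ => hpos _) univ_nonempty)
      univ_nonempty
  -- sums over the product type
  have hsum' : ∑ x, ∑ y, ∑ z, p (x, y, z) = 1 := by
    rw [← hsum]; simp [Fintype.sum_prod_type]
  have hpXsum : ∑ x, pX x = 1 := by simp_rw [hpX]; exact hsum'
  have hpZsum : ∑ z, pZ z = 1 := by
    simp_rw [hpZ]
    rw [Finset.sum_comm]
    calc ∑ x, ∑ z, ∑ y, p (x, y, z) = ∑ x, ∑ y, ∑ z, p (x, y, z) := by
          exact Finset.sum_congr rfl (fun x _ => Finset.sum_comm)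
      _ = 1 := hsum'
  -- key marginal over y of p0
  have hy : ∀ x z, ∑ y, p0 ((x : 𝒳), (y : 𝒴), (z : 𝒵)) = pX x * pZ z := by
    intro x z
    simp_rw [hp0]
    rw [← Finset.sum_mul, ← Finset.sum_mul, ← Finset.sum_div, ← hpXZ,
      div_self (hpXZpos x z).ne']
    ring
  have hp0pos : ∀ u, 0 < p0 u := by
    rintro ⟨x, y, z⟩
    rw [hp0]
    exact mul_pos (mul_pos (div_pos (hpos _) (hpXZpos x z)) (hpXpos x)) (hpZpos z)
  have hp0sum : ∑ u, p0 u = 1 := by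
    rw [Fintype.sum_prod_type]
    have : ∀ x : 𝒳, ∑ v : 𝒴 × 𝒵, p0 (x, v) = pX x := by
      intro x
      rw [Fintype.sum_prod_type]
      calc ∑ y, ∑ z, p0 (x, y, z) = ∑ z, ∑ y, p0 (x, y, z) := Finset.sum_comm
        _ = ∑ z, pX x * pZ z := Finset.sum_congr rfl (fun z _ => hy x z)
        _ = pX x * ∑ z, pZ z := by rw [Finset.mul_sum]
        _ = pX x := by rw [hpZsum, mul_one]
    simp_rw [this]; exact hpXsum
  -- marginals of p0
  have hp0X : ∀ x, ∑ y, ∑ z', p0 ((x : 𝒳), y, z') = pX x := by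
    intro x
    calc ∑ y, ∑ z', p0 (x, y, z') = ∑ z', ∑ y, p0 (x, y, z') := Finset.sum_comm
      _ = ∑ z', pX x * pZ z' := Finset.sum_congr rfl (fun z _ => hy x z)
      _ = pX x := by rw [← Finset.mul_sum, hpZsum, mul_one]
  have hp0Z : ∀ z, ∑ x', ∑ y, p0 (x', y, (z : 𝒵)) = pZ z := by
    intro z
    calc ∑ x', ∑ y, p0 (x', y, z) = ∑ x', pX x' * pZ z :=
          Finset.sum_congr rfl (fun x _ => hy x z)
      _ = pZ z := by rw [← Finset.sum_mul, hpXsum, one_mul]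
  refine ⟨⟨hp0pos, hp0sum⟩, ?_, ?_⟩
  · intro x z
    rw [hy, hp0X, hp0Z]
  · intro q hqpos hqsum hqind
    set qX : 𝒳 → ℝ := fun x => ∑ y, ∑ z, q (x, y, z) with hqX
    set qZ : 𝒵 → ℝ := fun z => ∑ x, ∑ y, q (x, y, z) with hqZ
    have hqXpos : ∀ x, 0 < qX x := fun x =>
      Finset.sum_pos (fun y _ => Finset.sum_pos (fun z _ => hqpos _) univ_nonempty)
        univ_nonempty
    have hqZpos : ∀ z, 0 < qZ z := fun z =>
      Finset.sum_pos (fun x _ => Finset.sum_pos (fun y _ => hqpos _) univ_nonempty)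
        univ_nonempty
    have hqsum' : ∑ x, ∑ y, ∑ z, q (x, y, z) = 1 := by
      rw [← hqsum]; simp [Fintype.sum_prod_type]
    have hqXsum : ∑ x, qX x = 1 := hqsum'
    have hqZsum : ∑ z, qZ z = 1 := by
      show ∑ z, ∑ x, ∑ y, q (x, y, z) = 1
      rw [Finset.sum_comm]
      calc ∑ x, ∑ z, ∑ y, q (x, y, z) = ∑ x, ∑ y, ∑ z, q (x, y, z) := by
            exact Finset.sum_congr rfl (fun x _ => Finset.sum_comm)
        _ = 1 := hqsum'
    have hqXZ : ∀ x z, ∑ y, q ((x : 𝒳), y, (z : 𝒵)) = qX x * qZ z := hqind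
    -- the key inequality : ∑ p log (q/p0) ≤ 0
    have key : ∑ u, p u * Real.log (q u / p0 u) ≤ 0 := by
      have split : ∀ u : 𝒳 × 𝒴 × 𝒵,
          p u * Real.log (q u / p0 u) =
            p u * Real.log ((q u * pXZ u.1 u.2.2) / (p u * (qX u.1 * qZ u.2.2)))
          + p u * Real.log (qX u.1 / pX u.1)
          + p u * Real.log (qZ u.2.2 / pZ u.2.2) := by
        rintro ⟨x, y, z⟩
        have hA : (0:ℝ) < (q (x,y,z) * pXZ x z) / (p (x,y,z) * (qX x * qZ z)) := by
          have := hqpos (x,y,z); have := hpos (x,y,z)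
          have := hpXZpos x z; have := hqXpos x; have := hqZpos z
          positivity
        have hB : (0:ℝ) < qX x / pX x := div_pos (hqXpos x) (hpXpos x)
        have hC : (0:ℝ) < qZ z / pZ z := div_pos (hqZpos z) (hpZpos z)
        have harg : q (x,y,z) / p0 (x,y,z)
            = ((q (x,y,z) * pXZ x z) / (p (x,y,z) * (qX x * qZ z)))
              * (qX x / pX x) * (qZ z / pZ z) := by
          rw [hp0]
          have h1 := (hpos (x,y,z)).ne'
          have h2 := (hpXZpos x z).ne'
          have h3 := (hpXpos x).ne'
          have h4 := (hpZpos z).ne'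
          have h5 := (hqXpos x).ne'
          have h6 := (hqZpos z).ne'
          field_simp
        show p (x,y,z) * Real.log (q (x,y,z) / p0 (x,y,z)) = _
        rw [harg, Real.log_mul (mul_pos hA hB).ne' hC.ne', Real.log_mul hA.ne' hB.ne']
        ring
      rw [Finset.sum_congr rfl (fun u _ => split u)]
      have expand : ∀ f : 𝒳 × 𝒴 × 𝒵 → ℝ,
          ∑ u, f u = ∑ x, ∑ y, ∑ z, f (x, y, z) := by
        intro f; simp [Fintype.sum_prod_type]
      rw [Finset.sum_add_distrib, Finset.sum_add_distrib]
      have S1 : ∑ u : 𝒳 × 𝒴 × 𝒵,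
          p u * Real.log ((q u * pXZ u.1 u.2.2) / (p u * (qX u.1 * qZ u.2.2))) ≤ 0 := by
        rw [expand]
        have : ∀ x : 𝒳, ∑ y, ∑ z, p (x,y,z) *
            Real.log ((q (x,y,z) * pXZ x z) / (p (x,y,z) * (qX x * qZ z))) ≤ 0 := by
          intro x
          rw [Finset.sum_comm]
          have inner : ∀ z : 𝒵, ∑ y, p (x,y,z) *
              Real.log ((q (x,y,z) * pXZ x z) / (p (x,y,z) * (qX x * qZ z))) ≤ 0 := by
            intro z
            have := gibbs_aux (fun y => p (x,y,z))
              (fun y => q (x,y,z) * (pXZ x z / (qX x * qZ z)))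
              (fun y => hpos _)
              (fun y => by
                have := hqpos (x,y,z); have := hpXZpos x z
                have := hqXpos x; have := hqZpos z; positivity)
              (by
                rw [← Finset.sum_mul, hqXZ,
                  mul_div_cancel₀ _ (mul_pos (hqXpos x) (hqZpos z)).ne', hpXZ])
            calc ∑ y, p (x,y,z) *
                Real.log ((q (x,y,z) * pXZ x z) / (p (x,y,z) * (qX x * qZ z)))
                = ∑ y, p (x,y,z) *
                  Real.log ((q (x,y,z) * (pXZ x z / (qX x * qZ z))) / p (x,y,z)) := by
                  refine Finset.sum_congr rfl (fun y _ => ?_)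
                  have harg2 : (q (x,y,z) * pXZ x z) / (p (x,y,z) * (qX x * qZ z))
                      = q (x,y,z) * (pXZ x z / (qX x * qZ z)) / p (x,y,z) := by
                    field_simp
                  rw [harg2]
              _ ≤ 0 := this
          calc ∑ z, ∑ y, p (x,y,z) *
              Real.log ((q (x,y,z) * pXZ x z) / (p (x,y,z) * (qX x * qZ z)))
              ≤ ∑ z : 𝒵, (0:ℝ) := Finset.sum_le_sum (fun z _ => inner z)
            _ = 0 := by simp
        calc ∑ x, ∑ y, ∑ z, p (x,y,z) *
            Real.log ((q (x,y,z) * pXZ x z) / (p (x,y,z) * (qX x * qZ z)))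
            ≤ ∑ x : 𝒳, (0:ℝ) := Finset.sum_le_sum (fun x _ => this x)
          _ = 0 := by simp
      have S2 : ∑ u : 𝒳 × 𝒴 × 𝒵, p u * Real.log (qX u.1 / pX u.1) ≤ 0 := by
        rw [expand]
        have : ∀ x : 𝒳, ∑ y, ∑ z, p (x,y,z) * Real.log (qX x / pX x)
            = pX x * Real.log (qX x / pX x) := by
          intro x
          simp_rw [← Finset.sum_mul]
          rw [← hpX]
        rw [Finset.sum_congr rfl (fun x _ => this x)]
        exact gibbs_aux pX qX hpXpos hqXpos (by rw [hqXsum, hpXsum])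
      have S3 : ∑ u : 𝒳 × 𝒴 × 𝒵, p u * Real.log (qZ u.2.2 / pZ u.2.2) ≤ 0 := by
        rw [expand]
        have comm : ∑ x, ∑ y, ∑ z, p (x,y,z) * Real.log (qZ z / pZ z)
            = ∑ z, ∑ x, ∑ y, p (x,y,z) * Real.log (qZ z / pZ z) := by
          calc ∑ x, ∑ y, ∑ z, p (x,y,z) * Real.log (qZ z / pZ z)
              = ∑ x, ∑ z, ∑ y, p (x,y,z) * Real.log (qZ z / pZ z) :=
                Finset.sum_congr rfl (fun x _ => Finset.sum_comm)
            _ = ∑ z, ∑ x, ∑ y, p (x,y,z) * Real.log (qZ z / pZ z) := Finset.sum_comm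
        rw [comm]
        have : ∀ z : 𝒵, ∑ x, ∑ y, p (x,y,z) * Real.log (qZ z / pZ z)
            = pZ z * Real.log (qZ z / pZ z) := by
          intro z
          simp_rw [← Finset.sum_mul]
          rw [← hpZ]
        rw [Finset.sum_congr rfl (fun z _ => this z)]
        exact gibbs_aux pZ qZ hpZpos hqZpos (by rw [hqZsum, hpZsum])
      linarith
    -- conclude
    have diff : ∑ u, p u * Real.log (p u / q u)
        - ∑ u, p u * Real.log (p u / p0 u) = - ∑ u, p u * Real.log (q u / p0 u) := by
      rw [← Finset.sum_sub_distrib, ← Finset.sum_neg_distrib]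
      refine Finset.sum_congr rfl (fun u _ => ?_)
      rw [Real.log_div (hpos u).ne' (hqpos u).ne',
        Real.log_div (hpos u).ne' (hp0pos u).ne',
        Real.log_div (hqpos u).ne' (hp0pos u).ne']
      ring
    linarith
end

section
/- Let X ∈ ℝ^g and Z ∈ ℝ^h be independent square-integrable random vectors with means m_X, m_Z and covariances Σ_X, Σ_Z, and write Z̃ = (1, Zᵀ)ᵀ. Let θ ∈ ℝ^{g(1+h)} and suppose the regression function is μ(x,z) = θᵀ(z̃ ⊗ x) + f(z) where z̃ = (1, zᵀ)ᵀ (the partially linear model with interactions). Define μ₀(Z) = E_{X'}[μ(X', Z)] for X' an independent copy of X (independent of Z), so that μ(X,Z) − μ₀(Z) = θᵀ(Z̃ ⊗ (X − m_X)). Then the decorrelated LOCO parameter satisfies ψ₃ := E[(μ(X,Z) − μ₀(Z))²] = θᵀ Ω θ, where Ω = E[Z̃Z̃ᵀ] ⊗ Σ_X and E[Z̃Z̃ᵀ] is the (1+h)×(1+h) block matrix [[1, m_Zᵀ], [m_Z, Σ_Z + m_Z m_Zᵀ]]. -/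
open MeasureTheory ProbabilityTheory

lemma l2_mul_integrable {Ω : Type*} [MeasurableSpace Ω] {P : MeasureTheory.Measure Ω}
    {f g : Ω → ℝ} (hf : MeasureTheory.MemLp f 2 P) (hg : MeasureTheory.MemLp g 2 P) :
    MeasureTheory.Integrable (fun ω => f ω * g ω) P := by
  have h1 := (hf.add hg).integrable_sq
  have h2 := hf.integrable_sq
  have h3 := hg.integrable_sq
  have e : (fun ω => f ω * g ω)
      = fun ω => (((f + g) ω) ^ 2 - f ω ^ 2 - g ω ^ 2) / 2 := by
    ext ω; simp [Pi.add_apply]; ring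
  rw [e]
  exact ((h1.sub h2).sub h3).div_const 2

/-- In the partially linear model with interactions `μ(x,z) = θᵀ(z̃ ⊗ x) + f(z)`,
with `X ⟂ Z`, the decorrelated LOCO parameter is `ψ₃ = E[(μ(X,Z) − μ₀(Z))²] = θᵀΩθ`,
where `Ω = E[Z̃Z̃ᵀ] ⊗ Σ_X` and `E[Z̃Z̃ᵀ] = [[1, m_Zᵀ],[m_Z, Σ_Z + m_Z m_Zᵀ]]`. -/
theorem stmt9
    {Ω : Type*} [MeasurableSpace Ω] (P : Measure Ω) [IsProbabilityMeasure P]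
    {g h : ℕ}
    (X : Ω → Fin g → ℝ) (Z : Ω → Fin h → ℝ)
    (hindep : IndepFun X Z P)
    (hX2 : ∀ i, MemLp (fun ω => X ω i) 2 P)
    (hZ2 : ∀ k, MemLp (fun ω => Z ω k) 2 P)
    (mX : Fin g → ℝ) (hmX : ∀ i, mX i = ∫ ω, X ω i ∂P)
    (mZ : Fin h → ℝ) (hmZ : ∀ k, mZ k = ∫ ω, Z ω k ∂P)
    (SigX : Matrix (Fin g) (Fin g) ℝ)
    (hSigX : ∀ i j, SigX i j = ∫ ω, (X ω i - mX i) * (X ω j - mX j) ∂P)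
    (SigZ : Matrix (Fin h) (Fin h) ℝ)
    (hSigZ : ∀ k l, SigZ k l = ∫ ω, (Z ω k - mZ k) * (Z ω l - mZ l) ∂P)
    (θ : Fin (h + 1) × Fin g → ℝ)
    (f : (Fin h → ℝ) → ℝ)
    (μ : (Fin g → ℝ) → (Fin h → ℝ) → ℝ)
    (hμ : ∀ x z, μ x z
        = (∑ a : Fin (h + 1) × Fin g, θ a * (Matrix.vecCons (1 : ℝ) z a.1 * x a.2)) + f z)
    (μ0 : (Fin h → ℝ) → ℝ)
    (hμ0 : ∀ z, μ0 z
        = (∑ a : Fin (h + 1) × Fin g, θ a * (Matrix.vecCons (1 : ℝ) z a.1 * mX a.2)) + f z)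
    -- `B = E[Z̃Z̃ᵀ]`, given in block form `[[1, m_Zᵀ],[m_Z, Σ_Z + m_Z m_Zᵀ]]`
    (B : Matrix (Fin (h + 1)) (Fin (h + 1)) ℝ)
    (hB00 : B 0 0 = 1)
    (hB0r : ∀ l : Fin h, B 0 l.succ = mZ l)
    (hBr0 : ∀ k : Fin h, B k.succ 0 = mZ k)
    (hBrr : ∀ k l : Fin h, B k.succ l.succ = SigZ k l + mZ k * mZ l)
    -- `Ωmat = B ⊗ Σ_X`
    (Ωmat : Matrix (Fin (h + 1) × Fin g) (Fin (h + 1) × Fin g) ℝ)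
    (hΩ : ∀ a b : Fin (h + 1) × Fin g, Ωmat a b = B a.1 b.1 * SigX a.2 b.2) :
    (∫ ω, (μ (X ω) (Z ω) - μ0 (Z ω)) ^ 2 ∂P)
      = ∑ a, ∑ b, θ a * Ωmat a b * θ b := by

  classical
  -- the extended Z vector
  set Zt : Ω → Fin (h + 1) → ℝ := fun ω => Matrix.vecCons (1 : ℝ) (Z ω) with hZtdef
  have hZt2 : ∀ k, MemLp (fun ω => Zt ω k) 2 P := by
    intro k
    induction k using Fin.cases with
    | zero => simpa [Zt] using memLp_const (1 : ℝ)
    | succ l => simpa [Zt] using hZ2 l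
  -- measurability of the coordinate maps of vecCons
  have hmvc : ∀ k : Fin (h + 1), Measurable (fun z : Fin h → ℝ => Matrix.vecCons (1 : ℝ) z k) := by
    intro k
    induction k using Fin.cases with
    | zero => simpa using measurable_const
    | succ l => simpa using measurable_pi_apply l
  -- centered X coordinates
  have hXc2 : ∀ i, MemLp (fun ω => X ω i - mX i) 2 P := fun i => (hX2 i).sub (memLp_const _)
  have hXint : ∀ i j, Integrable (fun ω => (X ω i - mX i) * (X ω j - mX j)) P :=
    fun i j => l2_mul_integrable (hXc2 i) (hXc2 j)
  have hZtint : ∀ k l, Integrable (fun ω => Zt ω k * Zt ω l) P :=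
    fun k l => l2_mul_integrable (hZt2 k) (hZt2 l)
  have hZ1 : ∀ k, Integrable (fun ω => Z ω k) P := fun k => (hZ2 k).integrable one_le_two
  -- B k l = ∫ Zt k * Zt l
  have hB : ∀ k l, B k l = ∫ ω, Zt ω k * Zt ω l ∂P := by
    intro k l
    induction k using Fin.cases with
    | zero =>
      induction l using Fin.cases with
      | zero => simp [Zt, hB00]
      | succ l' => simp [Zt, hB0r l', hmZ l']
    | succ k' =>
      induction l using Fin.cases with
      | zero => simp [Zt, hBr0 k', hmZ k']
      | succ l' =>
        have e : (fun ω => (Z ω k' - mZ k') * (Z ω l' - mZ l'))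
            = fun ω => Z ω k' * Z ω l' - (mZ k' * Z ω l' + mZ l' * Z ω k') + mZ k' * mZ l' := by
          ext ω; ring
        have hint : Integrable (fun ω => Z ω k' * Z ω l') P := l2_mul_integrable (hZ2 k') (hZ2 l')
        have h2 : Integrable (fun ω => mZ k' * Z ω l' + mZ l' * Z ω k') P :=
          ((hZ1 l').const_mul _).add ((hZ1 k').const_mul _)
        have hm1 : Integrable (fun ω => mZ k' * Z ω l') P := (hZ1 l').const_mul _
        have hm2 : Integrable (fun ω => mZ l' * Z ω k') P := (hZ1 k').const_mul _
        have hsub : Integrable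
            (fun ω => Z ω k' * Z ω l' - (mZ k' * Z ω l' + mZ l' * Z ω k')) P := hint.sub h2
        have hS : SigZ k' l' = (∫ ω, Z ω k' * Z ω l' ∂P) - mZ k' * mZ l' := by
          rw [hSigZ, e, integral_add hsub (integrable_const _),
            integral_sub hint h2, integral_add hm1 hm2,
            integral_const_mul, integral_const_mul, integral_const, ← hmZ, ← hmZ]
          simp; ring
        rw [hBrr k' l', hS]
        simp only [Zt, Matrix.cons_val_succ]
        ring
  -- the key pointwise identity
  have key : ∀ ω, μ (X ω) (Z ω) - μ0 (Z ω)
      = ∑ a : Fin (h + 1) × Fin g, θ a * (Zt ω a.1 * (X ω a.2 - mX a.2)) := by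
    intro ω
    rw [hμ, hμ0, add_sub_add_right_eq_sub, ← Finset.sum_sub_distrib]
    exact Finset.sum_congr rfl fun a _ => by simp [Zt]; ring
  -- termwise integrand
  have hterm : ∀ (a b : Fin (h + 1) × Fin g),
      Integrable (fun ω =>
        ((X ω a.2 - mX a.2) * (X ω b.2 - mX b.2)) * (Zt ω a.1 * Zt ω b.1)) P ∧
      (∫ ω, ((X ω a.2 - mX a.2) * (X ω b.2 - mX b.2)) * (Zt ω a.1 * Zt ω b.1) ∂P)
        = SigX a.2 b.2 * B a.1 b.1 := by
    intro a b
    have hφm : Measurable (fun x : Fin g → ℝ => (x a.2 - mX a.2) * (x b.2 - mX b.2)) :=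
      ((measurable_pi_apply _).sub measurable_const).mul
        ((measurable_pi_apply _).sub measurable_const)
    have hψm : Measurable (fun z : Fin h → ℝ =>
        Matrix.vecCons (1 : ℝ) z a.1 * Matrix.vecCons (1 : ℝ) z b.1) :=
      (hmvc a.1).mul (hmvc b.1)
    have hind : IndepFun (fun ω => (X ω a.2 - mX a.2) * (X ω b.2 - mX b.2))
        (fun ω => Zt ω a.1 * Zt ω b.1) P := hindep.comp hφm hψm
    constructor
    · exact hind.integrable_mul (hXint a.2 b.2) (hZtint a.1 b.1)
    · have := hind.integral_fun_mul_eq_mul_integral (hXint a.2 b.2).aestronglyMeasurable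
        (hZtint a.1 b.1).aestronglyMeasurable
      calc (∫ ω, ((X ω a.2 - mX a.2) * (X ω b.2 - mX b.2)) * (Zt ω a.1 * Zt ω b.1) ∂P)
          = (∫ ω, (X ω a.2 - mX a.2) * (X ω b.2 - mX b.2) ∂P) * ∫ ω, Zt ω a.1 * Zt ω b.1 ∂P := this
        _ = SigX a.2 b.2 * B a.1 b.1 := by rw [← hSigX, ← hB]
  -- main computation
  have e1 : (fun ω => (μ (X ω) (Z ω) - μ0 (Z ω)) ^ 2)
      = fun ω => ∑ a : Fin (h + 1) × Fin g, ∑ b : Fin (h + 1) × Fin g,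
          (θ a * θ b) * (((X ω a.2 - mX a.2) * (X ω b.2 - mX b.2)) * (Zt ω a.1 * Zt ω b.1)) := by
    ext ω
    rw [key ω, sq, Finset.sum_mul_sum]
    exact Finset.sum_congr rfl fun a _ => Finset.sum_congr rfl fun b _ => by ring
  rw [e1, integral_finset_sum _ (fun a _ => integrable_finset_sum _
      (fun b _ => ((hterm a b).1.const_mul _)))]
  refine Finset.sum_congr rfl fun a _ => ?_
  rw [integral_finset_sum _ (fun b _ => ((hterm a b).1.const_mul _))]
  refine Finset.sum_congr rfl fun b _ => ?_
  rw [integral_const_mul, (hterm a b).2, hΩ a b]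
  ring
end

section
/- Let (X, Z, Y) be random variables on a probability space with Y square-integrable, and let μ(X,Z) = E[Y | X, Z], μ(Z) = E[Y | Z], and ψ_L = E[(Y − μ(Z))²] − E[(Y − μ(X,Z))²]. Let μ̄_Z be any square-integrable Z-measurable random variable and μ̄_{XZ} any square-integrable (X,Z)-measurable random variable (playing the roles of plugged-in estimates μ̄(Z) and μ̄(X,Z)). Then the population plug-in error satisfies the exact identity E[(Y − μ̄_Z)²] − E[(Y − μ̄_{XZ})²] − ψ_L = E[(μ(Z) − μ̄_Z)²] − E[(μ(X,Z) − μ̄_{XZ})²]. In particular, the bias of the plug-in LOCO functional is second order: it is bounded in absolute value by ‖μ̄_Z − μ(Z)‖² + ‖μ̄_{XZ} − μ(X,Z)‖², where ‖·‖ denotes the L²(P) norm. -/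
open MeasureTheory

lemma half_add_half : (1 : ENNReal) / 1 = 1 / 2 + 1 / 2 := by
  rw [ENNReal.div_add_div_same, ENNReal.div_self (by norm_num) (by norm_num),
    one_add_one_eq_two, ENNReal.div_self (by norm_num) (by norm_num)]

lemma memLp_mul_of_memLp_two {Ω : Type*} {m0 : MeasurableSpace Ω} {P : Measure Ω}
    {f g : Ω → ℝ} (hf : MemLp f 2 P) (hg : MemLp g 2 P) :
    Integrable (fun ω => f ω * g ω) P := by
  have := (hg.smul hf : MemLp (f • g) 1 P)
  exact memLp_one_iff_integrable.mp this

lemma memLp_condexp_two {Ω : Type*} {m m0 : MeasurableSpace Ω} (hm : m ≤ m0)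
    {P : Measure Ω} [IsFiniteMeasure P] {Y : Ω → ℝ} (hY : MemLp Y 2 P) :
    MemLp (P[Y|m]) 2 P := by
  set f : Lp ℝ 2 P := hY.toLp Y with hf
  have hae : ((condExpL2 ℝ ℝ hm f : lpMeas ℝ ℝ m 2 P) : Ω → ℝ) =ᵐ[P] P[Y|m] := by
    refine ae_eq_condExp_of_forall_setIntegral_eq hm (hY.integrable one_le_two)
      (fun s _ _ => ?_) (fun s hs hμs => ?_) ?_
    · exact ((Lp.memLp _).integrable one_le_two).integrableOn
    · rw [integral_condExpL2_eq hm f hs hμs.ne]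
      exact setIntegral_congr_ae (hm s hs) ((hY.coeFn_toLp).mono fun x hx _ => hx)
    · exact aestronglyMeasurable_condExpL2 hm f
  exact (Lp.memLp _).ae_eq hae

lemma integral_mul_sub_condexp {Ω : Type*} {m m0 : MeasurableSpace Ω} (hm : m ≤ m0)
    {P : Measure Ω} [IsFiniteMeasure P] {Y h : Ω → ℝ} (hY : MemLp Y 2 P)
    (hh2 : MemLp h 2 P) (hhm : StronglyMeasurable[m] h) :
    ∫ ω, h ω * (Y ω - (P[Y|m]) ω) ∂P = 0 := by
  have hμ2 : MemLp (P[Y|m]) 2 P := memLp_condexp_two hm hY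
  have h1 : Integrable (fun ω => h ω * Y ω) P := memLp_mul_of_memLp_two hh2 hY
  have h2 : Integrable (fun ω => h ω * (P[Y|m]) ω) P := memLp_mul_of_memLp_two hh2 hμ2
  have key : P[(fun ω => h ω * Y ω)|m] =ᵐ[P] fun ω => h ω * (P[Y|m]) ω :=
    condExp_mul_of_stronglyMeasurable_left hhm h1 (hY.integrable one_le_two)
  have hint : ∫ ω, h ω * Y ω ∂P = ∫ ω, h ω * (P[Y|m]) ω ∂P := by
    rw [← integral_condExp hm]
    exact integral_congr_ae key
  have : ∫ ω, h ω * (Y ω - (P[Y|m]) ω) ∂P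
      = (∫ ω, h ω * Y ω ∂P) - ∫ ω, h ω * (P[Y|m]) ω ∂P := by
    rw [← integral_sub h1 h2]
    congr 1; funext ω; ring
  rw [this, hint, sub_self]

lemma pythagoras_condexp {Ω : Type*} {m m0 : MeasurableSpace Ω} (hm : m ≤ m0)
    {P : Measure Ω} [IsFiniteMeasure P] {Y g : Ω → ℝ} (hY : MemLp Y 2 P)
    (hg2 : MemLp g 2 P) (hgm : StronglyMeasurable[m] g) :
    ∫ ω, (Y ω - g ω) ^ 2 ∂P
      = (∫ ω, (Y ω - (P[Y|m]) ω) ^ 2 ∂P) + ∫ ω, ((P[Y|m]) ω - g ω) ^ 2 ∂P := by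
  have hμ2 : MemLp (P[Y|m]) 2 P := memLp_condexp_two hm hY
  have hYμ : MemLp (fun ω => Y ω - (P[Y|m]) ω) 2 P := hY.sub hμ2
  have hμg : MemLp (fun ω => (P[Y|m]) ω - g ω) 2 P := hμ2.sub hg2
  have i1 : Integrable (fun ω => (Y ω - (P[Y|m]) ω) ^ 2) P := hYμ.integrable_sq
  have i2 : Integrable (fun ω => ((P[Y|m]) ω - g ω) ^ 2) P := hμg.integrable_sq
  have i3 : Integrable (fun ω => ((P[Y|m]) ω - g ω) * (Y ω - (P[Y|m]) ω)) P :=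
    memLp_mul_of_memLp_two hμg hYμ
  have hcross : ∫ ω, ((P[Y|m]) ω - g ω) * (Y ω - (P[Y|m]) ω) ∂P = 0 :=
    integral_mul_sub_condexp hm hY hμg (stronglyMeasurable_condExp.sub hgm)
  have hexp : (fun ω => (Y ω - g ω) ^ 2)
      = fun ω => (Y ω - (P[Y|m]) ω) ^ 2 + (((P[Y|m]) ω - g ω) ^ 2
          + 2 * (((P[Y|m]) ω - g ω) * (Y ω - (P[Y|m]) ω))) := by
    funext ω; ring
  have i23 : Integrable (fun ω => ((P[Y|m]) ω - g ω) ^ 2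
      + 2 * (((P[Y|m]) ω - g ω) * (Y ω - (P[Y|m]) ω))) P := i2.add (i3.const_mul 2)
  rw [hexp, integral_add i1 i23, integral_add i2 (i3.const_mul 2),
    integral_const_mul, hcross]
  ring

/-- Exact second-order expansion of the plug-in LOCO functional: for any square-integrable
`Z`-measurable `μ̄_Z` and `(X,Z)`-measurable `μ̄_{XZ}`,
`E[(Y − μ̄_Z)²] − E[(Y − μ̄_{XZ})²] − ψ_L = E[(μ(Z) − μ̄_Z)²] − E[(μ(X,Z) − μ̄_{XZ})²]`,
so the plug-in bias is bounded by `‖μ̄_Z − μ(Z)‖² + ‖μ̄_{XZ} − μ(X,Z)‖²` (squared `L²(P)` norms,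
written as integrals of squares). -/
theorem stmt19
    {Ω : Type*} {m0 : MeasurableSpace Ω} (P : Measure Ω) [IsProbabilityMeasure P]
    {𝒳 𝒵 : Type*} [MeasurableSpace 𝒳] [MeasurableSpace 𝒵]
    (X : Ω → 𝒳) (Z : Ω → 𝒵) (Y : Ω → ℝ)
    (hX : Measurable X) (hZ : Measurable Z) (hY : MemLp Y 2 P)
    (μbarZ μbarXZ : Ω → ℝ)
    (hbZ2 : MemLp μbarZ 2 P)
    (hbZm : StronglyMeasurable[MeasurableSpace.comap Z inferInstance] μbarZ)
    (hbXZ2 : MemLp μbarXZ 2 P)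
    (hbXZm : StronglyMeasurable[MeasurableSpace.comap (fun ω => (X ω, Z ω)) inferInstance]
        μbarXZ)
    (ψL : ℝ)
    (hψ : ψL = (∫ ω, (Y ω - (P[Y | MeasurableSpace.comap Z inferInstance]) ω) ^ 2 ∂P)
        - ∫ ω, (Y ω
            - (P[Y | MeasurableSpace.comap (fun ω' => (X ω', Z ω')) inferInstance]) ω) ^ 2 ∂P) :
    ((∫ ω, (Y ω - μbarZ ω) ^ 2 ∂P) - (∫ ω, (Y ω - μbarXZ ω) ^ 2 ∂P) - ψL
      = (∫ ω, ((P[Y | MeasurableSpace.comap Z inferInstance]) ω - μbarZ ω) ^ 2 ∂P)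
        - ∫ ω, ((P[Y | MeasurableSpace.comap (fun ω' => (X ω', Z ω')) inferInstance]) ω
            - μbarXZ ω) ^ 2 ∂P) ∧
    |(∫ ω, (Y ω - μbarZ ω) ^ 2 ∂P) - (∫ ω, (Y ω - μbarXZ ω) ^ 2 ∂P) - ψL|
      ≤ (∫ ω, (μbarZ ω - (P[Y | MeasurableSpace.comap Z inferInstance]) ω) ^ 2 ∂P)
        + ∫ ω, (μbarXZ ω
            - (P[Y | MeasurableSpace.comap (fun ω' => (X ω', Z ω')) inferInstance]) ω) ^ 2 ∂P := by
  have hm1 : MeasurableSpace.comap Z inferInstance ≤ m0 := hZ.comap_le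
  have hm2 : MeasurableSpace.comap (fun ω' => (X ω', Z ω')) inferInstance ≤ m0 :=
    (hX.prodMk hZ).comap_le
  have p1 := pythagoras_condexp hm1 hY hbZ2 hbZm
  have p2 := pythagoras_condexp hm2 hY hbXZ2 hbXZm
  have hswap1 : (fun ω => (μbarZ ω - (P[Y | MeasurableSpace.comap Z inferInstance]) ω) ^ 2)
      = fun ω => ((P[Y | MeasurableSpace.comap Z inferInstance]) ω - μbarZ ω) ^ 2 := by
    funext ω; ring
  have hswap2 : (fun ω => (μbarXZ ω
        - (P[Y | MeasurableSpace.comap (fun ω' => (X ω', Z ω')) inferInstance]) ω) ^ 2)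
      = fun ω => ((P[Y | MeasurableSpace.comap (fun ω' => (X ω', Z ω')) inferInstance]) ω
          - μbarXZ ω) ^ 2 := by
    funext ω; ring
  have heq : (∫ ω, (Y ω - μbarZ ω) ^ 2 ∂P) - (∫ ω, (Y ω - μbarXZ ω) ^ 2 ∂P) - ψL
      = (∫ ω, ((P[Y | MeasurableSpace.comap Z inferInstance]) ω - μbarZ ω) ^ 2 ∂P)
        - ∫ ω, ((P[Y | MeasurableSpace.comap (fun ω' => (X ω', Z ω')) inferInstance]) ω
            - μbarXZ ω) ^ 2 ∂P := by
    rw [hψ, p1, p2]; ring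
  refine ⟨heq, ?_⟩
  rw [heq, hswap1, hswap2]
  have ha : 0 ≤ ∫ ω, ((P[Y | MeasurableSpace.comap Z inferInstance]) ω - μbarZ ω) ^ 2 ∂P :=
    integral_nonneg fun ω => sq_nonneg _
  have hb : 0 ≤ ∫ ω, ((P[Y | MeasurableSpace.comap (fun ω' => (X ω', Z ω')) inferInstance]) ω
      - μbarXZ ω) ^ 2 ∂P := integral_nonneg fun ω => sq_nonneg _
  rw [abs_sub_le_iff]
  constructor <;> linarith
end
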